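/- Let T = (c₁,c₂,c₃,c₄,0,0,f₁,f₂,f₃,f₄,t₁,t₂) and T′ = (c₁,c₂,c₃,c₄,0,0,f₁′,f₂′,f₃′,f₄′,t₁′,t₂′) be tuples in ℤ¹² with the same values c₁, c₂, c₃, c₄, all nonzero, and with gcd(c₁,c₄) = gcd(c₂,c₃) = gcd(c₂,c₄) = 1. Then T and T′ are ψ-equivalent if and only if: f₁ ≡ f₁′ (mod c₁) and c₁c₂f₃ + c₁c₃f₂ + c₂c₃f₁ ≡ c₁c₂f₃′ + c₁c₃f₂′ + c₂c₃f₁′ (mod c₁c₄). -/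

import Mathlib

/-- A 12-tuple of integers, with coordinates written `(c₁,…,c₆,f₁,…,f₄,t₁,t₂)`. -/
structure Tuple : Type where
  c1 : ℤ
  c2 : ℤ
  c3 : ℤ
  c4 : ℤ
  c5 : ℤ
  c6 : ℤ
  f1 : ℤ
  f2 : ℤ
  f3 : ℤ
  f4 : ℤ
  t1 : ℤ
  t2 : ℤ

/-- The move ψ₂₁ : f₃↦f₃+c₅, f₄↦f₄−c₁, t₁↦t₁+f₁. -/
def psi21 : Equiv.Perm Tuple where
  toFun x := { x with f3 := x.f3 + x.c5, f4 := x.f4 - x.c1, t1 := x.t1 + x.f1 }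
  invFun x := { x with f3 := x.f3 - x.c5, f4 := x.f4 + x.c1, t1 := x.t1 - x.f1 }
  left_inv x := by cases x; simp
  right_inv x := by cases x; simp

/-- The move ψ₄₁ : f₂↦f₂+c₆, f₃↦f₃−c₅, t₂↦t₂−f₁. -/
def psi41 : Equiv.Perm Tuple where
  toFun x := { x with f2 := x.f2 + x.c6, f3 := x.f3 - x.c5, t2 := x.t2 - x.f1 }
  invFun x := { x with f2 := x.f2 - x.c6, f3 := x.f3 + x.c5, t2 := x.t2 + x.f1 }
  left_inv x := by cases x; simp
  right_inv x := by cases x; simp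

/-- The move ψ₁₂ : f₃↦f₃−c₄, f₄↦f₄+c₂, t₁↦t₁+f₂. -/
def psi12 : Equiv.Perm Tuple where
  toFun x := { x with f3 := x.f3 - x.c4, f4 := x.f4 + x.c2, t1 := x.t1 + x.f2 }
  invFun x := { x with f3 := x.f3 + x.c4, f4 := x.f4 - x.c2, t1 := x.t1 - x.f2 }
  left_inv x := by cases x; simp
  right_inv x := by cases x; simp

/-- The move ψ₃₂ : f₁↦f₁+c₆, f₄↦f₄−c₂, t₂↦t₂−f₂. -/
def psi32 : Equiv.Perm Tuple where
  toFun x := { x with f1 := x.f1 + x.c6, f4 := x.f4 - x.c2, t2 := x.t2 - x.f2 }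
  invFun x := { x with f1 := x.f1 - x.c6, f4 := x.f4 + x.c2, t2 := x.t2 + x.f2 }
  left_inv x := by cases x; simp
  right_inv x := by cases x; simp

/-- The move ψ₄₃ : f₁↦f₁+c₅, f₂↦f₂−c₄, t₁↦t₁+f₃. -/
def psi43 : Equiv.Perm Tuple where
  toFun x := { x with f1 := x.f1 + x.c5, f2 := x.f2 - x.c4, t1 := x.t1 + x.f3 }
  invFun x := { x with f1 := x.f1 - x.c5, f2 := x.f2 + x.c4, t1 := x.t1 - x.f3 }
  left_inv x := by cases x; simp
  right_inv x := by cases x; simp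

/-- The move ψ₂₃ : f₁↦f₁−c₅, f₄↦f₄+c₃, t₂↦t₂−f₃. -/
def psi23 : Equiv.Perm Tuple where
  toFun x := { x with f1 := x.f1 - x.c5, f4 := x.f4 + x.c3, t2 := x.t2 - x.f3 }
  invFun x := { x with f1 := x.f1 + x.c5, f4 := x.f4 - x.c3, t2 := x.t2 + x.f3 }
  left_inv x := by cases x; simp
  right_inv x := by cases x; simp

/-- The move ψ₃₄ : f₁↦f₁−c₁, f₂↦f₂+c₂, t₁↦t₁+f₄. -/
def psi34 : Equiv.Perm Tuple where
  toFun x := { x with f1 := x.f1 - x.c1, f2 := x.f2 + x.c2, t1 := x.t1 + x.f4 }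
  invFun x := { x with f1 := x.f1 + x.c1, f2 := x.f2 - x.c2, t1 := x.t1 - x.f4 }
  left_inv x := by cases x; simp
  right_inv x := by cases x; simp

/-- The move ψ₁₄ : f₂↦f₂−c₂, f₃↦f₃+c₃, t₂↦t₂−f₄. -/
def psi14 : Equiv.Perm Tuple where
  toFun x := { x with f2 := x.f2 - x.c2, f3 := x.f3 + x.c3, t2 := x.t2 - x.f4 }
  invFun x := { x with f2 := x.f2 + x.c2, f3 := x.f3 - x.c3, t2 := x.t2 + x.f4 }
  left_inv x := by cases x; simp
  right_inv x := by cases x; simp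

/-- The list of the eight ψ-moves. -/
def psiMoves : List (Equiv.Perm Tuple) :=
  [psi21, psi41, psi12, psi32, psi43, psi23, psi34, psi14]

/-- Two tuples are ψ-equivalent if one is obtained from the other by a finite
composition of the eight ψ-moves and their inverses, i.e. they are related by the
equivalence relation generated by single applications of the moves. -/
def PsiEquiv : Tuple → Tuple → Prop :=
  Relation.EqvGen (fun x y => ∃ g ∈ psiMoves, g x = y)
namespace PsiAux

lemma of_eq {a b b' : Tuple} (h : PsiEquiv a b) (e : b = b') : PsiEquiv a b' := e ▸ h
lemma of_eq' {a a' b : Tuple} (e : a = a') (h : PsiEquiv a b) : PsiEquiv a' b := e ▸ h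
lemma etrans {a b c : Tuple} : PsiEquiv a b → PsiEquiv b c → PsiEquiv a c :=
  Relation.EqvGen.trans _ _ _
lemma esymm {a b : Tuple} : PsiEquiv a b → PsiEquiv b a := Relation.EqvGen.symm _ _

lemma step (g : Equiv.Perm Tuple) (hg : g ∈ psiMoves) (x : Tuple) : PsiEquiv x (g x) :=
  Relation.EqvGen.rel _ _ ⟨g, hg, rfl⟩

lemma iter (P : ℤ → Tuple) (h : ∀ n : ℤ, PsiEquiv (P n) (P (n+1))) : ∀ n : ℤ, PsiEquiv (P 0) (P n) := by
  intro n
  induction n using Int.induction_on with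
  | zero => exact Relation.EqvGen.refl _
  | succ n ih => exact etrans ih (h n)
  | pred n ih =>
      rw [show (-(n:ℤ)-1) = -((n:ℤ)+1) by ring]
      refine etrans ih (esymm ?_)
      have := h (-((n:ℤ)+1))
      rw [show (-((n:ℤ)+1)+1) = -(n:ℤ) by ring] at this
      exact this

lemma mk_eq {a1 a2 a3 a4 a5 a6 a7 a8 a9 a10 a11 a12 b1 b2 b3 b4 b5 b6 b7 b8 b9 b10 b11 b12 : ℤ}
    (h1 : a1 = b1) (h2 : a2 = b2) (h3 : a3 = b3) (h4 : a4 = b4) (h5 : a5 = b5) (h6 : a6 = b6)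
    (h7 : a7 = b7) (h8 : a8 = b8) (h9 : a9 = b9) (h10 : a10 = b10) (h11 : a11 = b11)
    (h12 : a12 = b12) :
    (⟨a1,a2,a3,a4,a5,a6,a7,a8,a9,a10,a11,a12⟩ : Tuple) = ⟨b1,b2,b3,b4,b5,b6,b7,b8,b9,b10,b11,b12⟩ := by
  rw [h1,h2,h3,h4,h5,h6,h7,h8,h9,h10,h11,h12]


lemma stepA (c1 c2 c3 c4 f1 f2 f3 f4 t1 t2 : ℤ) :
    PsiEquiv ⟨c1,c2,c3,c4,0,0,f1,f2,f3,f4,t1,t2⟩ ⟨c1,c2,c3,c4,0,0,f1,f2,f3,f4 - c1,t1 + f1,t2⟩ :=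
  of_eq (step psi21 (by simp [psiMoves]) _) (by simp [psi21])

lemma iterA (c1 c2 c3 c4 f1 f2 f3 f4 t1 t2 n : ℤ) :
    PsiEquiv ⟨c1,c2,c3,c4,0,0,f1,f2,f3,f4,t1,t2⟩ ⟨c1,c2,c3,c4,0,0,f1,f2,f3,f4 - n*c1,t1 + n*f1,t2⟩ := by
  have key := iter (fun m => (⟨c1,c2,c3,c4,0,0,f1,f2,f3,f4 - m*c1,t1 + m*f1,t2⟩ : Tuple))
    (fun m => of_eq (stepA c1 c2 c3 c4 (f1) (f2) (f3) (f4 - m*c1) (t1 + m*f1) (t2))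
      (mk_eq rfl rfl rfl rfl rfl rfl (by ring) (by ring) (by ring) (by ring) (by ring) (by ring))) n
  exact of_eq' (mk_eq rfl rfl rfl rfl rfl rfl (by ring) (by ring) (by ring) (by ring) (by ring) (by ring)) key

lemma stepB (c1 c2 c3 c4 f1 f2 f3 f4 t1 t2 : ℤ) :
    PsiEquiv ⟨c1,c2,c3,c4,0,0,f1,f2,f3,f4,t1,t2⟩ ⟨c1,c2,c3,c4,0,0,f1,f2,f3,f4,t1,t2 - f1⟩ :=
  of_eq (step psi41 (by simp [psiMoves]) _) (by simp [psi41])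

lemma iterB (c1 c2 c3 c4 f1 f2 f3 f4 t1 t2 n : ℤ) :
    PsiEquiv ⟨c1,c2,c3,c4,0,0,f1,f2,f3,f4,t1,t2⟩ ⟨c1,c2,c3,c4,0,0,f1,f2,f3,f4,t1,t2 - n*f1⟩ := by
  have key := iter (fun m => (⟨c1,c2,c3,c4,0,0,f1,f2,f3,f4,t1,t2 - m*f1⟩ : Tuple))
    (fun m => of_eq (stepB c1 c2 c3 c4 (f1) (f2) (f3) (f4) (t1) (t2 - m*f1))
      (mk_eq rfl rfl rfl rfl rfl rfl (by ring) (by ring) (by ring) (by ring) (by ring) (by ring))) n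
  exact of_eq' (mk_eq rfl rfl rfl rfl rfl rfl (by ring) (by ring) (by ring) (by ring) (by ring) (by ring)) key

lemma stepC (c1 c2 c3 c4 f1 f2 f3 f4 t1 t2 : ℤ) :
    PsiEquiv ⟨c1,c2,c3,c4,0,0,f1,f2,f3,f4,t1,t2⟩ ⟨c1,c2,c3,c4,0,0,f1,f2,f3 - c4,f4 + c2,t1 + f2,t2⟩ :=
  of_eq (step psi12 (by simp [psiMoves]) _) (by simp [psi12])

lemma iterC (c1 c2 c3 c4 f1 f2 f3 f4 t1 t2 n : ℤ) :
    PsiEquiv ⟨c1,c2,c3,c4,0,0,f1,f2,f3,f4,t1,t2⟩ ⟨c1,c2,c3,c4,0,0,f1,f2,f3 - n*c4,f4 + n*c2,t1 + n*f2,t2⟩ := by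
  have key := iter (fun m => (⟨c1,c2,c3,c4,0,0,f1,f2,f3 - m*c4,f4 + m*c2,t1 + m*f2,t2⟩ : Tuple))
    (fun m => of_eq (stepC c1 c2 c3 c4 (f1) (f2) (f3 - m*c4) (f4 + m*c2) (t1 + m*f2) (t2))
      (mk_eq rfl rfl rfl rfl rfl rfl (by ring) (by ring) (by ring) (by ring) (by ring) (by ring))) n
  exact of_eq' (mk_eq rfl rfl rfl rfl rfl rfl (by ring) (by ring) (by ring) (by ring) (by ring) (by ring)) key

lemma stepD (c1 c2 c3 c4 f1 f2 f3 f4 t1 t2 : ℤ) :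
    PsiEquiv ⟨c1,c2,c3,c4,0,0,f1,f2,f3,f4,t1,t2⟩ ⟨c1,c2,c3,c4,0,0,f1,f2,f3,f4 - c2,t1,t2 - f2⟩ :=
  of_eq (step psi32 (by simp [psiMoves]) _) (by simp [psi32])

lemma iterD (c1 c2 c3 c4 f1 f2 f3 f4 t1 t2 n : ℤ) :
    PsiEquiv ⟨c1,c2,c3,c4,0,0,f1,f2,f3,f4,t1,t2⟩ ⟨c1,c2,c3,c4,0,0,f1,f2,f3,f4 - n*c2,t1,t2 - n*f2⟩ := by
  have key := iter (fun m => (⟨c1,c2,c3,c4,0,0,f1,f2,f3,f4 - m*c2,t1,t2 - m*f2⟩ : Tuple))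
    (fun m => of_eq (stepD c1 c2 c3 c4 (f1) (f2) (f3) (f4 - m*c2) (t1) (t2 - m*f2))
      (mk_eq rfl rfl rfl rfl rfl rfl (by ring) (by ring) (by ring) (by ring) (by ring) (by ring))) n
  exact of_eq' (mk_eq rfl rfl rfl rfl rfl rfl (by ring) (by ring) (by ring) (by ring) (by ring) (by ring)) key

lemma stepE (c1 c2 c3 c4 f1 f2 f3 f4 t1 t2 : ℤ) :
    PsiEquiv ⟨c1,c2,c3,c4,0,0,f1,f2,f3,f4,t1,t2⟩ ⟨c1,c2,c3,c4,0,0,f1,f2 - c4,f3,f4,t1 + f3,t2⟩ :=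
  of_eq (step psi43 (by simp [psiMoves]) _) (by simp [psi43])

lemma iterE (c1 c2 c3 c4 f1 f2 f3 f4 t1 t2 n : ℤ) :
    PsiEquiv ⟨c1,c2,c3,c4,0,0,f1,f2,f3,f4,t1,t2⟩ ⟨c1,c2,c3,c4,0,0,f1,f2 - n*c4,f3,f4,t1 + n*f3,t2⟩ := by
  have key := iter (fun m => (⟨c1,c2,c3,c4,0,0,f1,f2 - m*c4,f3,f4,t1 + m*f3,t2⟩ : Tuple))
    (fun m => of_eq (stepE c1 c2 c3 c4 (f1) (f2 - m*c4) (f3) (f4) (t1 + m*f3) (t2))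
      (mk_eq rfl rfl rfl rfl rfl rfl (by ring) (by ring) (by ring) (by ring) (by ring) (by ring))) n
  exact of_eq' (mk_eq rfl rfl rfl rfl rfl rfl (by ring) (by ring) (by ring) (by ring) (by ring) (by ring)) key

lemma stepF (c1 c2 c3 c4 f1 f2 f3 f4 t1 t2 : ℤ) :
    PsiEquiv ⟨c1,c2,c3,c4,0,0,f1,f2,f3,f4,t1,t2⟩ ⟨c1,c2,c3,c4,0,0,f1,f2,f3,f4 + c3,t1,t2 - f3⟩ :=
  of_eq (step psi23 (by simp [psiMoves]) _) (by simp [psi23])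

lemma iterF (c1 c2 c3 c4 f1 f2 f3 f4 t1 t2 n : ℤ) :
    PsiEquiv ⟨c1,c2,c3,c4,0,0,f1,f2,f3,f4,t1,t2⟩ ⟨c1,c2,c3,c4,0,0,f1,f2,f3,f4 + n*c3,t1,t2 - n*f3⟩ := by
  have key := iter (fun m => (⟨c1,c2,c3,c4,0,0,f1,f2,f3,f4 + m*c3,t1,t2 - m*f3⟩ : Tuple))
    (fun m => of_eq (stepF c1 c2 c3 c4 (f1) (f2) (f3) (f4 + m*c3) (t1) (t2 - m*f3))
      (mk_eq rfl rfl rfl rfl rfl rfl (by ring) (by ring) (by ring) (by ring) (by ring) (by ring))) n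
  exact of_eq' (mk_eq rfl rfl rfl rfl rfl rfl (by ring) (by ring) (by ring) (by ring) (by ring) (by ring)) key

lemma stepG (c1 c2 c3 c4 f1 f2 f3 f4 t1 t2 : ℤ) :
    PsiEquiv ⟨c1,c2,c3,c4,0,0,f1,f2,f3,f4,t1,t2⟩ ⟨c1,c2,c3,c4,0,0,f1 - c1,f2 + c2,f3,f4,t1 + f4,t2⟩ :=
  of_eq (step psi34 (by simp [psiMoves]) _) (by simp [psi34])

lemma iterG (c1 c2 c3 c4 f1 f2 f3 f4 t1 t2 n : ℤ) :
    PsiEquiv ⟨c1,c2,c3,c4,0,0,f1,f2,f3,f4,t1,t2⟩ ⟨c1,c2,c3,c4,0,0,f1 - n*c1,f2 + n*c2,f3,f4,t1 + n*f4,t2⟩ := by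
  have key := iter (fun m => (⟨c1,c2,c3,c4,0,0,f1 - m*c1,f2 + m*c2,f3,f4,t1 + m*f4,t2⟩ : Tuple))
    (fun m => of_eq (stepG c1 c2 c3 c4 (f1 - m*c1) (f2 + m*c2) (f3) (f4) (t1 + m*f4) (t2))
      (mk_eq rfl rfl rfl rfl rfl rfl (by ring) (by ring) (by ring) (by ring) (by ring) (by ring))) n
  exact of_eq' (mk_eq rfl rfl rfl rfl rfl rfl (by ring) (by ring) (by ring) (by ring) (by ring) (by ring)) key

lemma stepH (c1 c2 c3 c4 f1 f2 f3 f4 t1 t2 : ℤ) :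
    PsiEquiv ⟨c1,c2,c3,c4,0,0,f1,f2,f3,f4,t1,t2⟩ ⟨c1,c2,c3,c4,0,0,f1,f2 - c2,f3 + c3,f4,t1,t2 - f4⟩ :=
  of_eq (step psi14 (by simp [psiMoves]) _) (by simp [psi14])

lemma iterH (c1 c2 c3 c4 f1 f2 f3 f4 t1 t2 n : ℤ) :
    PsiEquiv ⟨c1,c2,c3,c4,0,0,f1,f2,f3,f4,t1,t2⟩ ⟨c1,c2,c3,c4,0,0,f1,f2 - n*c2,f3 + n*c3,f4,t1,t2 - n*f4⟩ := by
  have key := iter (fun m => (⟨c1,c2,c3,c4,0,0,f1,f2 - m*c2,f3 + m*c3,f4,t1,t2 - m*f4⟩ : Tuple))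
    (fun m => of_eq (stepH c1 c2 c3 c4 (f1) (f2 - m*c2) (f3 + m*c3) (f4) (t1) (t2 - m*f4))
      (mk_eq rfl rfl rfl rfl rfl rfl (by ring) (by ring) (by ring) (by ring) (by ring) (by ring))) n
  exact of_eq' (mk_eq rfl rfl rfl rfl rfl rfl (by ring) (by ring) (by ring) (by ring) (by ring) (by ring)) key


lemma loop1 (c1 c2 c3 c4 g1 g2 g3 g4 s1 s2 a b : ℤ) :
    PsiEquiv ⟨c1,c2,c3,c4,0,0,g1,g2,g3,g4,s1,s2⟩
      ⟨c1,c2,c3,c4,0,0,g1,g2,g3,g4,s1 + a*b*c3, s2⟩ := by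
  have h := etrans (iterH c1 c2 c3 c4 g1 g2 g3 g4 s1 s2 a)
    (etrans (iterE _ _ _ _ _ _ _ _ _ _ b)
      (etrans (iterH _ _ _ _ _ _ _ _ _ _ (-a)) (iterE _ _ _ _ _ _ _ _ _ _ (-b))))
  exact of_eq h (mk_eq rfl rfl rfl rfl rfl rfl (by ring) (by ring) (by ring) (by ring) (by ring) (by ring))

lemma loop2 (c1 c2 c3 c4 g1 g2 g3 g4 s1 s2 a m : ℤ) :
    PsiEquiv ⟨c1,c2,c3,c4,0,0,g1,g2,g3,g4,s1,s2⟩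
      ⟨c1,c2,c3,c4,0,0,g1,g2,g3,g4,s1 - a*m*c2, s2 + a*m*c2⟩ := by
  have h := etrans (iterH c1 c2 c3 c4 g1 g2 g3 g4 s1 s2 a)
    (etrans (iterC _ _ _ _ _ _ _ _ _ _ m)
      (etrans (iterH _ _ _ _ _ _ _ _ _ _ (-a)) (iterC _ _ _ _ _ _ _ _ _ _ (-m))))
  exact of_eq h (mk_eq rfl rfl rfl rfl rfl rfl (by ring) (by ring) (by ring) (by ring) (by ring) (by ring))

lemma loop3 (c1 c2 c3 c4 g1 g2 g3 g4 s1 s2 u n : ℤ) :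
    PsiEquiv ⟨c1,c2,c3,c4,0,0,g1,g2,g3,g4,s1,s2⟩
      ⟨c1,c2,c3,c4,0,0,g1,g2,g3,g4,s1, s2 + n*u*c1⟩ := by
  have h := etrans (iterG c1 c2 c3 c4 g1 g2 g3 g4 s1 s2 u)
    (etrans (iterB _ _ _ _ _ _ _ _ _ _ n)
      (etrans (iterG _ _ _ _ _ _ _ _ _ _ (-u)) (iterB _ _ _ _ _ _ _ _ _ _ (-n))))
  exact of_eq h (mk_eq rfl rfl rfl rfl rfl rfl (by ring) (by ring) (by ring) (by ring) (by ring) (by ring))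

lemma loop4 (c1 c2 c3 c4 g1 g2 g3 g4 s1 s2 m b : ℤ) :
    PsiEquiv ⟨c1,c2,c3,c4,0,0,g1,g2,g3,g4,s1,s2⟩
      ⟨c1,c2,c3,c4,0,0,g1,g2,g3,g4,s1, s2 - m*b*c4⟩ := by
  have h := etrans (iterD c1 c2 c3 c4 g1 g2 g3 g4 s1 s2 m)
    (etrans (iterE _ _ _ _ _ _ _ _ _ _ b)
      (etrans (iterD _ _ _ _ _ _ _ _ _ _ (-m)) (iterE _ _ _ _ _ _ _ _ _ _ (-b))))
  exact of_eq h (mk_eq rfl rfl rfl rfl rfl rfl (by ring) (by ring) (by ring) (by ring) (by ring) (by ring))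

lemma tFree (c1 c2 c3 c4 g1 g2 g3 g4 s1 s2 s1' s2' p q r w : ℤ)
    (hpq : p*c2 + q*c3 = 1) (hrw : r*c1 + w*c4 = 1) :
    PsiEquiv ⟨c1,c2,c3,c4,0,0,g1,g2,g3,g4,s1,s2⟩
      ⟨c1,c2,c3,c4,0,0,g1,g2,g3,g4,s1',s2'⟩ := by
  have h := etrans (loop2 c1 c2 c3 c4 g1 g2 g3 g4 s1 s2 (-(s1'-s1)*p) 1)
    (etrans (loop1 _ _ _ _ _ _ _ _ _ _ ((s1'-s1)*q) 1)
      (etrans (loop3 _ _ _ _ _ _ _ _ _ _ (((s2'-s2) + (s1'-s1)*p*c2)*r) 1)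
        (loop4 _ _ _ _ _ _ _ _ _ _ (-(((s2'-s2) + (s1'-s1)*p*c2)*w)) 1)))
  exact of_eq h (mk_eq rfl rfl rfl rfl rfl rfl rfl rfl rfl rfl
    (by linear_combination (s1'-s1)*hpq)
    (by linear_combination ((s2'-s2) + (s1'-s1)*p*c2)*hrw))


def Qv (x : Tuple) : ℤ := x.c1*x.c2*x.f3 + x.c1*x.c3*x.f2 + x.c2*x.c3*x.f1

def Inv (x y : Tuple) : Prop :=
  x.c1 = y.c1 ∧ x.c2 = y.c2 ∧ x.c3 = y.c3 ∧ x.c4 = y.c4 ∧ x.c5 = y.c5 ∧ x.c6 = y.c6 ∧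
  (x.c5 = 0 → x.c6 = 0 → x.c1 ∣ x.f1 - y.f1 ∧ x.c1*x.c4 ∣ Qv x - Qv y)

lemma inv_of_equiv {x y : Tuple} (h : PsiEquiv x y) : Inv x y := by
  induction h with
  | rel a b hab =>
      obtain ⟨g, hg, rfl⟩ := hab
      obtain ⟨d1,d2,d3,d4,d5,d6,g1,g2,g3,g4,s1,s2⟩ := a
      simp only [psiMoves, List.mem_cons, List.not_mem_nil, or_false] at hg
      rcases hg with rfl|rfl|rfl|rfl|rfl|rfl|rfl|rfl
      · refine ⟨rfl, rfl, rfl, rfl, rfl, rfl, fun h5 h6 => ?_⟩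
        subst h5; subst h6
        simp only [psi21, Equiv.coe_fn_mk, Qv]
        exact ⟨⟨0, by ring⟩, ⟨0, by ring⟩⟩
      · refine ⟨rfl, rfl, rfl, rfl, rfl, rfl, fun h5 h6 => ?_⟩
        subst h5; subst h6
        simp only [psi41, Equiv.coe_fn_mk, Qv]
        exact ⟨⟨0, by ring⟩, ⟨0, by ring⟩⟩
      · refine ⟨rfl, rfl, rfl, rfl, rfl, rfl, fun h5 h6 => ?_⟩
        subst h5; subst h6
        simp only [psi12, Equiv.coe_fn_mk, Qv]
        exact ⟨⟨0, by ring⟩, ⟨d2, by ring⟩⟩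
      · refine ⟨rfl, rfl, rfl, rfl, rfl, rfl, fun h5 h6 => ?_⟩
        subst h5; subst h6
        simp only [psi32, Equiv.coe_fn_mk, Qv]
        exact ⟨⟨0, by ring⟩, ⟨0, by ring⟩⟩
      · refine ⟨rfl, rfl, rfl, rfl, rfl, rfl, fun h5 h6 => ?_⟩
        subst h5; subst h6
        simp only [psi43, Equiv.coe_fn_mk, Qv]
        exact ⟨⟨0, by ring⟩, ⟨d3, by ring⟩⟩
      · refine ⟨rfl, rfl, rfl, rfl, rfl, rfl, fun h5 h6 => ?_⟩
        subst h5; subst h6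
        simp only [psi23, Equiv.coe_fn_mk, Qv]
        exact ⟨⟨0, by ring⟩, ⟨0, by ring⟩⟩
      · refine ⟨rfl, rfl, rfl, rfl, rfl, rfl, fun h5 h6 => ?_⟩
        subst h5; subst h6
        simp only [psi34, Equiv.coe_fn_mk, Qv]
        exact ⟨⟨1, by ring⟩, ⟨0, by ring⟩⟩
      · refine ⟨rfl, rfl, rfl, rfl, rfl, rfl, fun h5 h6 => ?_⟩
        subst h5; subst h6
        simp only [psi14, Equiv.coe_fn_mk, Qv]
        exact ⟨⟨0, by ring⟩, ⟨0, by ring⟩⟩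
  | refl a => exact ⟨rfl, rfl, rfl, rfl, rfl, rfl, fun _ _ => ⟨by simp, by simp⟩⟩
  | symm a b h ih =>
      obtain ⟨e1,e2,e3,e4,e5,e6,himp⟩ := ih
      refine ⟨e1.symm, e2.symm, e3.symm, e4.symm, e5.symm, e6.symm, fun h5 h6 => ?_⟩
      obtain ⟨⟨k1,hk1⟩,⟨k2,hk2⟩⟩ := himp (by rw [e5, h5]) (by rw [e6, h6])
      rw [← e5] at h5
      refine ⟨⟨-k1, by rw [← e1]; linarith⟩, ⟨-k2, ?_⟩⟩
      have : Qv b - Qv a = -(Qv a - Qv b) := by ring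
      rw [this, hk2, ← e1, ← e4]; ring
  | trans a b c h1 h2 ih1 ih2 =>
      obtain ⟨e1,e2,e3,e4,e5,e6,himp⟩ := ih1
      obtain ⟨e1',e2',e3',e4',e5',e6',himp'⟩ := ih2
      refine ⟨e1.trans e1', e2.trans e2', e3.trans e3', e4.trans e4', e5.trans e5',
        e6.trans e6', fun h5 h6 => ?_⟩
      obtain ⟨⟨k1,hk1⟩,⟨k2,hk2⟩⟩ := himp h5 h6
      obtain ⟨⟨k1',hk1'⟩,⟨k2',hk2'⟩⟩ := himp' (by rw [← e5, h5]) (by rw [← e6, h6])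
      refine ⟨⟨k1 + k1', by rw [← e1] at hk1'; linarith⟩, ⟨k2 + k2', ?_⟩⟩
      have : Qv a - Qv c = (Qv a - Qv b) + (Qv b - Qv c) := by ring
      rw [this, hk2, hk2', ← e1, ← e4]; ring

end PsiAux
theorem classification_case5 (c1 c2 c3 c4 f1 f2 f3 f4 t1 t2 f1' f2' f3' f4' t1' t2' : ℤ)
    (hc1 : c1 ≠ 0) (hc2 : c2 ≠ 0) (hc3 : c3 ≠ 0) (hc4 : c4 ≠ 0)
    (h14 : Int.gcd c1 c4 = 1) (h23 : Int.gcd c2 c3 = 1) (h24 : Int.gcd c2 c4 = 1) :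
    PsiEquiv ⟨c1, c2, c3, c4, 0, 0, f1, f2, f3, f4, t1, t2⟩
        ⟨c1, c2, c3, c4, 0, 0, f1', f2', f3', f4', t1', t2'⟩ ↔
      (c1 ∣ f1 - f1' ∧
        c1 * c4 ∣ (c1 * c2 * f3 + c1 * c3 * f2 + c2 * c3 * f1) -
          (c1 * c2 * f3' + c1 * c3 * f2' + c2 * c3 * f1')) := by
  constructor
  · intro h
    obtain ⟨-, -, -, -, -, -, himp⟩ := PsiAux.inv_of_equiv h
    obtain ⟨hd1, hd2⟩ := himp rfl rfl
    exact ⟨hd1, by simpa [PsiAux.Qv] using hd2⟩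
  · rintro ⟨⟨u, hu⟩, ⟨w, hw⟩⟩
    obtain ⟨s, v, hsv⟩ := Int.isCoprime_iff_gcd_eq_one.mpr h24
    obtain ⟨p, q, hpq⟩ := Int.isCoprime_iff_gcd_eq_one.mpr h23
    obtain ⟨r, w', hrw⟩ := Int.isCoprime_iff_gcd_eq_one.mpr h14
    have hcancel : c2*(f3 - f3') + c3*(f2 + u*c2 - f2') = c4*w := by
      have h0 : c1 * (c2*(f3 - f3') + c3*(f2 + u*c2 - f2')) = c1 * (c4*w) := by
        linear_combination hw - c2*c3*hu
      exact mul_left_cancel₀ hc1 h0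
    have h := PsiAux.etrans (PsiAux.iterG c1 c2 c3 c4 f1 f2 f3 f4 t1 t2 u)
      (PsiAux.etrans (PsiAux.iterH _ _ _ _ _ _ _ _ _ _ (s*(f2 + u*c2 - f2')))
        (PsiAux.etrans (PsiAux.iterE _ _ _ _ _ _ _ _ _ _ (v*(f2 + u*c2 - f2')))
          (PsiAux.etrans (PsiAux.iterC _ _ _ _ _ _ _ _ _ _ ((f3 - f3')*v + s*w))
            (PsiAux.etrans (PsiAux.iterD _ _ _ _ _ _ _ _ _ _ (-(f4' - f4 - ((f3 - f3')*v + s*w)*c2)*p))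
              (PsiAux.etrans (PsiAux.iterF _ _ _ _ _ _ _ _ _ _ ((f4' - f4 - ((f3 - f3')*v + s*w)*c2)*q))
                (PsiAux.tFree _ _ _ _ _ _ _ _ _ _ t1' t2' p q r w' hpq hrw))))))
    refine PsiAux.of_eq h (PsiAux.mk_eq rfl rfl rfl rfl rfl rfl ?_ ?_ ?_ ?_ rfl rfl)
    · linear_combination hu
    · linear_combination (-(f2 + u*c2 - f2'))*hsv
    · linear_combination s*hcancel - (f3 - f3')*hsv
    · linear_combination (f4' - f4 - ((f3 - f3')*v + s*w)*c2)*hpq
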